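/- Let G be a connected simple graph on the vertex set Fin N (with N ≥ 1) with real Laplacian matrix L (the degree matrix minus the adjacency matrix), and let g : Fin N → ℝ satisfy g i ≥ 0 for all i and g i₀ > 0 for at least one vertex i₀. Then the matrix L + diag(g), where diag(g) is the diagonal matrix with entries g i, is symmetric positive definite (in particular nonsingular). -/

import Mathlib

open Matrix

/-- For a connected simple graph `G` on `Fin N` (`N ≥ 1`) with real
Laplacian matrix `L = G.lapMatrix ℝ`, and `g : Fin N → ℝ` with `g i ≥ 0` for all `i`
and `g i₀ > 0` for some `i₀`, the matrix `L + diagonal g` is symmetric positive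
definite, and in particular nonsingular. -/
theorem lapMatrix_add_diagonal_posDef
    (N : ℕ) (hN : 1 ≤ N) (G : SimpleGraph (Fin N)) [DecidableRel G.Adj]
    (hG : G.Connected) (g : Fin N → ℝ)
    (hg : ∀ i, 0 ≤ g i) (hg' : ∃ i₀, 0 < g i₀) :
    (G.lapMatrix ℝ + Matrix.diagonal g).PosDef ∧
      IsUnit (G.lapMatrix ℝ + Matrix.diagonal g) := by
  have hpd : (G.lapMatrix ℝ + Matrix.diagonal g).PosDef := by
    rw [posDef_iff_dotProduct_mulVec]
    constructor
    · exact (SimpleGraph.posSemidef_lapMatrix ℝ G).1.add (isHermitian_diagonal g)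
    · intro x hx
      have hL : 0 ≤ star x ⬝ᵥ (G.lapMatrix ℝ *ᵥ x) :=
        (SimpleGraph.posSemidef_lapMatrix ℝ G).dotProduct_mulVec_nonneg x
      have hDeq : star x ⬝ᵥ (Matrix.diagonal g *ᵥ x) = ∑ i, g i * (x i)^2 := by
        simp [dotProduct, mulVec_diagonal, star_trivial]
        congr 1; ext i; ring
      have hD : 0 ≤ star x ⬝ᵥ (Matrix.diagonal g *ᵥ x) := by
        rw [hDeq]
        exact Finset.sum_nonneg fun i _ => mul_nonneg (hg i) (sq_nonneg _)
      rw [add_mulVec, dotProduct_add]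
      rcases lt_or_eq_of_le hL with h | h
      · linarith
      rcases lt_or_eq_of_le hD with h' | h'
      · linarith
      exfalso
      -- both are zero; derive x = 0
      have hconst : ∀ i j, G.Reachable i j → x i = x j := by
        rw [← SimpleGraph.lapMatrix_toLinearMap₂'_apply'_eq_zero_iff_forall_reachable]
        rw [toLinearMap₂'_apply']
        simpa [star_trivial] using h.symm
      obtain ⟨i₀, hi₀⟩ := hg'
      have hx0 : ∀ i, x i = x i₀ := fun i => hconst i i₀ (hG.preconnected i i₀)
      have hsum : ∑ i, g i * (x i)^2 = 0 := by rw [← hDeq]; exact h'.symm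
      have hterm : g i₀ * (x i₀)^2 = 0 := by
        have := (Finset.sum_eq_zero_iff_of_nonneg
          (fun i _ => mul_nonneg (hg i) (sq_nonneg (x i)))).mp hsum i₀ (Finset.mem_univ _)
        exact this
      have hxi0 : x i₀ = 0 := by
        have := mul_eq_zero.mp hterm
        rcases this with h1 | h1
        · exact absurd h1 hi₀.ne'
        · exact pow_eq_zero_iff (n := 2) (by norm_num) |>.mp h1
      exact hx (funext fun i => by rw [hx0 i, hxi0]; rfl)
  refine ⟨hpd, ?_⟩
  exact (Matrix.isUnit_iff_isUnit_det _).mpr (isUnit_iff_ne_zero.mpr hpd.det_pos.ne')
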